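/- Negation as the limit of the XOR/carry iteration: let a : ℤ and define u, v : ℕ → ℤ by u 0 = ~~~a (the bitwise complement of a), v 0 = 1, u (k+1) = u k ^^^ v k, and v (k+1) = 2 * (u k &&& v k). Then in the 2-adic integers ℤ_[2], the sequence ((u k : ℤ_[2]))_k converges to ((-a : ℤ) : ℤ_[2]) and the carry sequence ((v k : ℤ_[2]))_k converges to 0. -/

import Mathlib

instance : XorOp ℤ := ⟨Int.xor⟩
instance : AndOp ℤ := ⟨Int.land⟩

private lemma nat_xor_add_two_mul_and (m n : ℕ) :
    (m ^^^ n) + 2 * (m &&& n) = m + n := by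
  induction m using Nat.binaryRec generalizing n with
  | zero => simp
  | bit b m ih =>
    induction n using Nat.bitCasesOn with
    | bit c n =>
      rw [Nat.xor_bit, Nat.land_bit]
      have := ih n
      cases b <;> cases c <;> simp [Nat.bit_val] at * <;> omega

private lemma nat_ldiff_add_and (m n : ℕ) :
    Nat.ldiff m n + (m &&& n) = m := by
  induction m using Nat.binaryRec generalizing n with
  | zero =>
    simp only [Nat.zero_and, Nat.add_zero]
    apply Nat.eq_of_testBit_eq
    intro i
    simp [Nat.testBit_ldiff]
  | bit b m ih =>
    induction n using Nat.bitCasesOn with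
    | bit c n =>
      rw [Nat.ldiff_bit, Nat.land_bit]
      have := ih n
      cases b <;> cases c <;> simp [Nat.bit_val] at * <;> omega

private lemma nat_lor_eq (m n : ℕ) :
    (m ||| n) = (m ^^^ n) + (m &&& n) := by
  induction m using Nat.binaryRec generalizing n with
  | zero => simp
  | bit b m ih =>
    induction n using Nat.bitCasesOn with
    | bit c n =>
      rw [Nat.lor_bit, Nat.xor_bit, Nat.land_bit]
      have := ih n
      cases b <;> cases c <;> simp [Nat.bit_val] at * <;> omega

private lemma int_xor_add_two_mul_and (x y : ℤ) :
    (x ^^^ y) + 2 * (x &&& y) = x + y := by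
  cases x with
  | ofNat m =>
    cases y with
    | ofNat n =>
      show ((m ^^^ n : ℕ) : ℤ) + 2 * ((m &&& n : ℕ) : ℤ) = (m : ℤ) + (n : ℤ)
      have := nat_xor_add_two_mul_and m n
      omega
    | negSucc n =>
      show (Int.negSucc (m ^^^ n)) + 2 * ((Nat.ldiff m n : ℕ) : ℤ)
          = (m : ℤ) + Int.negSucc n
      have h1 := nat_xor_add_two_mul_and m n
      have h2 := nat_ldiff_add_and m n
      simp only [Int.negSucc_eq]
      push_cast
      omega
  | negSucc m =>
    cases y with
    | ofNat n =>
      show (Int.negSucc (m ^^^ n)) + 2 * ((Nat.ldiff n m : ℕ) : ℤ)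
          = Int.negSucc m + (n : ℤ)
      have h1 := nat_xor_add_two_mul_and m n
      have h2 := nat_ldiff_add_and n m
      have h3 : m &&& n = n &&& m := Nat.land_comm m n
      simp only [Int.negSucc_eq]
      push_cast
      omega
    | negSucc n =>
      show ((m ^^^ n : ℕ) : ℤ) + 2 * (Int.negSucc (m ||| n))
          = Int.negSucc m + Int.negSucc n
      have h1 := nat_xor_add_two_mul_and m n
      have h2 := nat_lor_eq m n
      simp only [Int.negSucc_eq]
      push_cast
      omega

private lemma int_two_pow_dvd_land (k : ℕ) :
    ∀ x y : ℤ, (2 ^ k : ℤ) ∣ y → (2 ^ k : ℤ) ∣ (x &&& y) := by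
  induction k with
  | zero => intro x y _; simpa using one_dvd _
  | succ k ih =>
    intro x y hy
    have h2y : (2 : ℤ) ∣ y := (dvd_pow_self 2 (Nat.succ_ne_zero k)).trans hy
    have hb : y.bodd = false := by
      have h := Int.bodd_add_div2 y
      cases hby : y.bodd <;> simp [hby] at h ⊢
      omega
    have hx := Int.bit_decomp x
    have hyd := Int.bit_decomp y
    rw [hb] at hyd
    have hy2 : y = 2 * y.div2 := by
      conv_lhs => rw [← hyd]
      simp [Int.bit_val]
    have hdvd : (2 ^ k : ℤ) ∣ y.div2 := by
      rcases hy with ⟨c, hc⟩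
      refine ⟨c, ?_⟩
      have h' : (2 : ℤ) * y.div2 = 2 * (2 ^ k * c) := by
        rw [← hy2, hc, pow_succ]; ring
      linarith
    have hland : x &&& y = Int.bit (x.bodd && false) (x.div2 &&& y.div2) := by
      conv_lhs => rw [← hx, ← hyd]
      exact Int.land_bit _ _ _ _
    rw [hland]
    simp only [Bool.and_false, Int.bit_val, cond_false, add_zero]
    rw [pow_succ, mul_comm (2 ^ k : ℤ) 2]
    exact mul_dvd_mul_left 2 (ih _ _ hdvd)

/-- Negation as the limit of the XOR/carry iteration started at `(~~~a, 1)`: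
`u` converges 2-adically to `-a` and the carry sequence `v` converges to `0`. -/
theorem negation_xor_carry_limit (a : ℤ) (u v : ℕ → ℤ)
    (hu0 : u 0 = ~~~a) (hv0 : v 0 = 1)
    (hu : ∀ k, u (k + 1) = u k ^^^ v k)
    (hv : ∀ k, v (k + 1) = 2 * (u k &&& v k)) :
    Filter.Tendsto (fun k => ((u k : ℤ_[2]))) Filter.atTop (nhds ((-a : ℤ) : ℤ_[2])) ∧
    Filter.Tendsto (fun k => ((v k : ℤ_[2]))) Filter.atTop (nhds 0) := by
  -- complement: ~~~a = -a - 1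
  have hnot : (~~~a : ℤ) = -a - 1 := by
    cases a with
    | ofNat n => show Int.negSucc n = _; simp only [Int.negSucc_eq, Int.ofNat_eq_natCast]; ring
    | negSucc n => show (n : ℤ) = _; rw [Int.negSucc_eq]; push_cast; ring
  -- invariant: u k + v k = -a
  have key : ∀ k, u k + v k = -a := by
    intro k
    induction k with
    | zero => rw [hu0, hv0, hnot]; ring
    | succ k ih =>
      rw [hu k, hv k, int_xor_add_two_mul_and, ih]
  -- divisibility: 2^k ∣ v k
  have hd : ∀ k, (2 ^ k : ℤ) ∣ v k := by
    intro k
    induction k with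
    | zero => simp [hv0]
    | succ k ih =>
      rw [hv k, pow_succ, mul_comm ((2 : ℤ) ^ k) 2]
      exact mul_dvd_mul_left 2 (int_two_pow_dvd_land k _ _ ih)
  -- convergence of v to 0
  have hvt : Filter.Tendsto (fun k => ((v k : ℤ_[2]))) Filter.atTop (nhds 0) := by
    have hbound : ∀ k, ‖((v k : ℤ_[2]))‖ ≤ (1 / 2 : ℝ) ^ k := by
      intro k
      have h := (PadicInt.norm_int_le_pow_iff_dvd (p := 2) (k := v k) (n := k)).2 (hd k)
      have h2 : ((2 : ℕ) : ℝ) ^ (-(k : ℤ)) = (1 / 2 : ℝ) ^ k := by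
        rw [zpow_neg, zpow_natCast, one_div, inv_pow]
        norm_num
      rw [h2] at h
      exact h
    exact squeeze_zero_norm hbound
      (tendsto_pow_atTop_nhds_zero_of_lt_one (by norm_num) (by norm_num))
  refine ⟨?_, hvt⟩
  have hut : Filter.Tendsto (fun k => (((-a : ℤ) : ℤ_[2]) - (v k : ℤ_[2]))) Filter.atTop
      (nhds (((-a : ℤ) : ℤ_[2]) - 0)) := tendsto_const_nhds.sub hvt
  rw [sub_zero] at hut
  refine hut.congr fun k => ?_
  have : u k = -a - v k := by have := key k; omega
  rw [this]
  push_cast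
  ring
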